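/- arXiv:2001.10075 — 2 statements merged into one kernel-verified Lean document; each statement's English description precedes it below -/
import Mathlib

section
/- Let E0 be a commutative ring and let C0 be a commutative Q-algebra which is an E0-algebra. Let A be a finite abelian group, and for each pair of homomorphisms (s : Z_p^h → A, t : Z_p^n → A), write the product ring P = ∏_{(s,t)} C0. For a proper subgroup A' ⊊ A, define Tr_{A'} : (∏_{(s',t') : Z_p^h×Z_p^n → A'} C0) → P by sending the (s',t')-component to |A/A'| times itself, placed in the component of the composites with A' ↪ A, zero elsewhere. Then the quotient of P by the ideal generated by the images of Tr_{A'} over all proper subgroups A' is isomorphic to the product of copies of C0 indexed by pairs (s,t) such that im(s) and im(t) together generate A. -/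
open scoped Classical

variable {p n h : ℕ} [Fact p.Prime] {A : Type*} [AddCommGroup A]

/-- The index set of pairs of homomorphisms `(s : ℤ_p^h → A, t : ℤ_p^n → A)`. -/
abbrev PairIdx (p h n : ℕ) [Fact p.Prime] (A : Type*) [AddCommGroup A] : Type _ :=
  ((Fin h → ℤ_[p]) →+ A) × ((Fin n → ℤ_[p]) →+ A)

/-- The transfer map associated to a subgroup `A' ≤ A`: it sends a tuple indexed by
pairs of homomorphisms into `A'` to the tuple indexed by pairs of homomorphisms into
`A` which, at a pair `(s, t)` factoring through `A'`, is `|A/A'|` times the value at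
the restricted pair, and is `0` at all other pairs. -/
noncomputable def transferMap (p h n : ℕ) [Fact p.Prime] (A : Type*) [AddCommGroup A]
    (C0 : Type*) [CommRing C0] (A' : AddSubgroup A) :
    (PairIdx p h n A' → C0) → (PairIdx p h n A → C0) := fun φ i =>
  if hst : (∀ x, i.1 x ∈ A') ∧ (∀ x, i.2 x ∈ A') then
    (Nat.card (A ⧸ A') : C0) *
      φ (i.1.codRestrict A' hst.1, i.2.codRestrict A' hst.2)
  else 0

/-- Let `C0` be a commutative `ℚ`-algebra which is an algebra over a commutative ring
`E0`, and `A` a finite abelian group.  The quotient of the product ring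
`P = ∏_{(s,t)} C0`, indexed by pairs of homomorphisms `(s : ℤ_p^h → A, t : ℤ_p^n → A)`,
by the ideal generated by the images of the transfer maps from all proper subgroups
`A' ⊊ A`, is isomorphic to the product of copies of `C0` indexed by the pairs `(s,t)`
such that `im s` and `im t` together generate `A`. -/
theorem stmt15 (E0 C0 : Type*) [CommRing E0] [CommRing C0] [Algebra ℚ C0]
    [Algebra E0 C0] [Fintype A] :
    Nonempty
      (((PairIdx p h n A → C0) ⧸
          Ideal.span (⋃ A' ∈ {A' : AddSubgroup A | A' ≠ ⊤},
            Set.range (transferMap p h n A C0 A'))) ≃+*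
        ({i : PairIdx p h n A // i.1.range ⊔ i.2.range = ⊤} → C0)) := by
  set good := {i : PairIdx p h n A // i.1.range ⊔ i.2.range = ⊤}
  set π : (PairIdx p h n A → C0) →+* (good → C0) :=
    Pi.ringHom (fun i => Pi.evalRingHom (fun _ => C0) i.1) with hπ
  have hsurj : Function.Surjective π := by
    intro g
    refine ⟨fun i => if hi : i.1.range ⊔ i.2.range = ⊤ then g ⟨i, hi⟩ else 0, ?_⟩
    funext i
    simp [hπ, Pi.ringHom, i.2]
  have hker : RingHom.ker π =
      Ideal.span (⋃ A' ∈ {A' : AddSubgroup A | A' ≠ ⊤},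
        Set.range (transferMap p h n A C0 A')) := by
    apply le_antisymm
    · -- ker ≤ span
      intro f hf
      have hf' : ∀ i : PairIdx p h n A, i.1.range ⊔ i.2.range = ⊤ → f i = 0 := by
        intro i hi
        have := congrFun (hf : π f = 0) ⟨i, hi⟩
        simpa [hπ, Pi.ringHom] using this
      have : Finite (AddSubgroup A) :=
        Finite.of_injective (fun A' : AddSubgroup A => (A' : Set A)) SetLike.coe_injective
      have := Fintype.ofFinite (AddSubgroup A)
      -- define φ for each proper subgroup
      set N : AddSubgroup A → ℚ := fun A' => (Nat.card (A ⧸ A') : ℚ) with hN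
      have hNpos : ∀ A' : AddSubgroup A, 0 < Nat.card (A ⧸ A') := fun A' => Nat.card_pos
      set φ : (A' : AddSubgroup A) → PairIdx p h n A' → C0 := fun A' j =>
        if (A'.subtype.comp j.1).range ⊔ (A'.subtype.comp j.2).range = A' then
          algebraMap ℚ C0 (N A')⁻¹ * f (A'.subtype.comp j.1, A'.subtype.comp j.2)
        else 0 with hφ
      have key : f = ∑ A' ∈ Finset.univ.filter (fun A' : AddSubgroup A => A' ≠ ⊤),
          transferMap p h n A C0 A' (φ A') := by
        funext i
        rw [Finset.sum_apply]
        by_cases hi : i.1.range ⊔ i.2.range = ⊤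
        · rw [hf' i hi]
          refine (Finset.sum_eq_zero ?_).symm
          intro A' hA'
          simp only [Finset.mem_filter] at hA'
          unfold transferMap
          rw [dif_neg]
          rintro ⟨h1, h2⟩
          exact hA'.2 (top_le_iff.mp (hi ▸ sup_le
            (fun a ha => by obtain ⟨x, rfl⟩ := AddMonoidHom.mem_range.mp ha; exact h1 x)
            (fun a ha => by obtain ⟨x, rfl⟩ := AddMonoidHom.mem_range.mp ha; exact h2 x)))
        · set B := i.1.range ⊔ i.2.range with hB
          rw [Finset.sum_eq_single B]
          · unfold transferMap
            have hmem : (∀ x, i.1 x ∈ B) ∧ (∀ x, i.2 x ∈ B) := by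
              constructor
              · intro x; exact le_sup_left (α := AddSubgroup A) (AddMonoidHom.mem_range.mpr ⟨x, rfl⟩)
              · intro x; exact le_sup_right (α := AddSubgroup A) (AddMonoidHom.mem_range.mpr ⟨x, rfl⟩)
            rw [dif_pos hmem, hφ]
            have hc1 : B.subtype.comp (i.1.codRestrict B hmem.1) = i.1 := by
              ext x; rfl
            have hc2 : B.subtype.comp (i.2.codRestrict B hmem.2) = i.2 := by
              ext x; rfl
            simp only [hc1, hc2]
            rw [if_pos rfl]
            rw [← mul_assoc]
            have : (Nat.card (A ⧸ B) : C0) * algebraMap ℚ C0 (N B)⁻¹ = 1 := by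
              rw [← map_natCast (algebraMap ℚ C0), ← map_mul, hN]
              rw [mul_inv_cancel₀ (by exact_mod_cast (hNpos B).ne'), map_one]
            rw [this, one_mul]
          · intro A' hA' hne
            unfold transferMap
            split_ifs with hmem
            · rw [hφ]
              have hc1 : A'.subtype.comp (i.1.codRestrict A' hmem.1) = i.1 := by ext x; rfl
              have hc2 : A'.subtype.comp (i.2.codRestrict A' hmem.2) = i.2 := by ext x; rfl
              simp only [hc1, hc2]
              rw [if_neg (fun hh => hne hh.symm), mul_zero]
            · rfl
          · intro hB'
            exact absurd (Finset.mem_filter.mpr ⟨Finset.mem_univ B, hi⟩) hB'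
      rw [key]
      apply Ideal.sum_mem
      intro A' hA'
      apply Ideal.subset_span
      exact Set.mem_biUnion ((Finset.mem_filter.mp hA').2 : A' ∈ {A' : AddSubgroup A | A' ≠ ⊤})
        (Set.mem_range_self _)
    · -- span ≤ ker
      rw [Ideal.span_le]
      rintro x hx
      simp only [Set.mem_iUnion] at hx
      obtain ⟨A', hA', φ, rfl⟩ := hx
      show π _ = 0
      funext i
      simp only [hπ, Pi.ringHom]
      show transferMap p h n A C0 A' φ i.1 = 0
      unfold transferMap
      rw [dif_neg]
      rintro ⟨h1, h2⟩
      exact hA' (top_le_iff.mp (i.2 ▸ sup_le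
        (fun a ha => by obtain ⟨x, rfl⟩ := AddMonoidHom.mem_range.mp ha; exact h1 x)
        (fun a ha => by obtain ⟨x, rfl⟩ := AddMonoidHom.mem_range.mp ha; exact h2 x)))
  exact ⟨(Ideal.quotEquivOfEq hker.symm).trans
    (RingHom.quotientKerEquivOfSurjective hsurj)⟩
end

section
/- Over the 2-adic K-theory coefficient ring R = Z_2 (with formal group law x + y + xy), in the ring R[[x,y]]/(x² + 2x, y² + 2y), the ideal generated by x + 2, y + 2, and xy + x + y + 2 equals the ideal (2, x, y), and the quotient ring is F_2. -/
open MvPowerSeries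

/-- Pure algebra: the ideal identity holds in any commutative ring. -/
lemma span_eq_aux {R : Type*} [CommRing R] (a b : R) :
    Ideal.span {a + 2, b + 2, a * b + a + b + 2} = Ideal.span ({2, a, b} : Set R) := by
  apply le_antisymm
  · rw [Ideal.span_le]
    have h2 : (2 : R) ∈ Ideal.span ({2, a, b} : Set R) := Ideal.subset_span (by simp)
    have ha : a ∈ Ideal.span ({2, a, b} : Set R) := Ideal.subset_span (by simp)
    have hb : b ∈ Ideal.span ({2, a, b} : Set R) := Ideal.subset_span (by simp)
    rintro z hz
    simp only [Set.mem_insert_iff, Set.mem_singleton_iff] at hz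
    rcases hz with rfl | rfl | rfl
    · exact add_mem ha h2
    · exact add_mem hb h2
    · exact add_mem (add_mem (add_mem (Ideal.mul_mem_right b _ ha) ha) hb) h2
  · rw [Ideal.span_le]
    set J := Ideal.span ({a + 2, b + 2, a * b + a + b + 2} : Set R)
    have g1 : a + 2 ∈ J := Ideal.subset_span (by simp)
    have g2 : b + 2 ∈ J := Ideal.subset_span (by simp)
    have g3 : a * b + a + b + 2 ∈ J := Ideal.subset_span (by simp)
    have hbJ : b ∈ J := by
      have : b = (a + 2) + b * (a + 2) - (a * b + a + b + 2) := by ring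
      rw [this]
      exact sub_mem (add_mem g1 (Ideal.mul_mem_left _ _ g1)) g3
    have h2J : (2 : R) ∈ J := by
      have : (2 : R) = (b + 2) - b := by ring
      rw [this]; exact sub_mem g2 hbJ
    have haJ : a ∈ J := by
      have : a = (a + 2) - 2 := by ring
      rw [this]; exact sub_mem g1 h2J
    rintro z hz
    simp only [Set.mem_insert_iff, Set.mem_singleton_iff] at hz
    rcases hz with rfl | rfl | rfl
    · exact h2J
    · exact haJ
    · exact hbJ

/-- A power series in two variables with zero constant coefficient lies in `(X 0, X 1)`. -/
lemma mem_span_X_aux (f : MvPowerSeries (Fin 2) ℤ_[2])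
    (hf : (constantCoeff (σ := Fin 2) (R := ℤ_[2])) f = 0) :
    f ∈ Ideal.span ({X 0, X 1} : Set (MvPowerSeries (Fin 2) ℤ_[2])) := by
  classical
  set f0 : MvPowerSeries (Fin 2) ℤ_[2] := fun d => if d 0 = 0 then 0 else f d with hf0
  set f1 : MvPowerSeries (Fin 2) ℤ_[2] := fun d => if d 0 = 0 then f d else 0 with hf1
  have hsum : f = f0 + f1 := by
    ext d
    change f d = (if d 0 = 0 then 0 else f d) + (if d 0 = 0 then f d else 0)
    by_cases h : d 0 = 0 <;> simp [h]
  have h0 : (X 0 : MvPowerSeries (Fin 2) ℤ_[2]) ∣ f0 := by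
    rw [X_dvd_iff]
    intro m hm
    change (if m 0 = 0 then 0 else f m) = 0
    simp [hm]
  have h1 : (X 1 : MvPowerSeries (Fin 2) ℤ_[2]) ∣ f1 := by
    rw [X_dvd_iff]
    intro m hm
    change (if m 0 = 0 then f m else 0) = 0
    by_cases h : m 0 = 0
    · rw [if_pos h]
      have : m = 0 := by
        ext i
        fin_cases i
        · exact h
        · exact hm
      rw [this]
      exact hf
    · rw [if_neg h]
  rw [hsum]
  have m0 : f0 ∈ Ideal.span ({X 0, X 1} : Set (MvPowerSeries (Fin 2) ℤ_[2])) :=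
    Ideal.span_mono (by simp) (Ideal.mem_span_singleton.2 h0)
  have m1 : f1 ∈ Ideal.span ({X 0, X 1} : Set (MvPowerSeries (Fin 2) ℤ_[2])) :=
    Ideal.span_mono (by simp) (Ideal.mem_span_singleton.2 h1)
  exact add_mem m0 m1

/-- In `ℤ_2[[x,y]]/(x² + 2x, y² + 2y)` (the 2-adic K-theory of `B(ℤ/2 × ℤ/2)` with
the multiplicative formal group law `x + y + xy`), the ideal generated by `x + 2`,
`y + 2` and `xy + x + y + 2` equals the ideal `(2, x, y)`, and the quotient by this
ideal is `𝔽₂`. -/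
theorem stmt17
    (I : Ideal (MvPowerSeries (Fin 2) ℤ_[2]))
    (hI : I = Ideal.span {(X 0) ^ 2 + 2 * X 0, (X 1) ^ 2 + 2 * X 1})
    (x y : MvPowerSeries (Fin 2) ℤ_[2] ⧸ I)
    (hx : x = Ideal.Quotient.mk I (X 0)) (hy : y = Ideal.Quotient.mk I (X 1)) :
    Ideal.span {x + 2, y + 2, x * y + x + y + 2} =
        Ideal.span ({2, x, y} : Set (MvPowerSeries (Fin 2) ℤ_[2] ⧸ I)) ∧
      Nonempty
        (((MvPowerSeries (Fin 2) ℤ_[2] ⧸ I) ⧸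
            Ideal.span ({x + 2, y + 2, x * y + x + y + 2} :
              Set (MvPowerSeries (Fin 2) ℤ_[2] ⧸ I))) ≃+* ZMod 2) := by
  classical
  refine ⟨span_eq_aux x y, ?_⟩
  rw [span_eq_aux x y]
  set A := MvPowerSeries (Fin 2) ℤ_[2]
  set J : Ideal A := Ideal.span ({2, X 0, X 1} : Set A) with hJ
  set φ : A →+* ZMod 2 :=
    (PadicInt.toZMod).comp ((constantCoeff (σ := Fin 2) (R := ℤ_[2]))) with hφ
  have h2J : (2 : A) ∈ J := Ideal.subset_span (by simp)
  have hX0J : (X 0 : A) ∈ J := Ideal.subset_span (by simp)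
  have hX1J : (X 1 : A) ∈ J := Ideal.subset_span (by simp)
  -- ker φ = J
  have hker : RingHom.ker φ = J := by
    apply le_antisymm
    · intro f hf
      rw [RingHom.mem_ker, hφ, RingHom.comp_apply] at hf
      have hmem : (constantCoeff (σ := Fin 2) (R := ℤ_[2])) f ∈ Ideal.span ({(2 : ℤ_[2])} : Set ℤ_[2]) := by
        have := PadicInt.ker_toZMod (p := 2)
        have h2c : (((2:ℕ) : ℤ_[2]) : ℤ_[2]) = 2 := by norm_num
        rw [← h2c, ← PadicInt.maximalIdeal_eq_span_p, ← this]
        exact hf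
      obtain ⟨c, hc⟩ := Ideal.mem_span_singleton.1 hmem
      set g := f - (C (σ := Fin 2) (R := ℤ_[2])) ((constantCoeff (σ := Fin 2) (R := ℤ_[2])) f) with hg
      have hg0 : (constantCoeff (σ := Fin 2) (R := ℤ_[2])) g = 0 := by
        simp [hg]
      have hgJ : g ∈ J := Ideal.span_mono (by simp) (mem_span_X_aux g hg0)
      have hCJ : (C (σ := Fin 2) (R := ℤ_[2])) ((constantCoeff (σ := Fin 2) (R := ℤ_[2])) f) ∈ J := by
        rw [hc, map_mul]
        exact Ideal.mul_mem_right _ _ (by rw [show (C (σ := Fin 2) (R := ℤ_[2])) 2 = 2 from map_ofNat _ 2]; exact h2J)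
      have : f = (C (σ := Fin 2) (R := ℤ_[2])) ((constantCoeff (σ := Fin 2) (R := ℤ_[2])) f) + g := by
        rw [hg]; ring
      rw [this]
      exact add_mem hCJ hgJ
    · rw [hJ, Ideal.span_le]
      rintro z hz
      simp only [Set.mem_insert_iff, Set.mem_singleton_iff] at hz
      rcases hz with rfl | rfl | rfl
      · simp only [SetLike.mem_coe, RingHom.mem_ker, map_ofNat]
        decide
      · rw [SetLike.mem_coe, RingHom.mem_ker, hφ, RingHom.comp_apply, constantCoeff_X, map_zero]
      · rw [SetLike.mem_coe, RingHom.mem_ker, hφ, RingHom.comp_apply, constantCoeff_X, map_zero]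
  have hsurj : Function.Surjective φ := by
    intro z
    refine ⟨(C (σ := Fin 2) (R := ℤ_[2])) ((z.val : ℕ) : ℤ_[2]), ?_⟩
    simp only [hφ, RingHom.comp_apply, constantCoeff_C, map_natCast]
    exact ZMod.natCast_rightInverse z
  have e1 : (A ⧸ J) ≃+* ZMod 2 :=
    (Ideal.quotEquivOfEq hker.symm).trans (RingHom.quotientKerEquivOfSurjective hsurj)
  have hIJ : I ≤ J := by
    rw [hI, Ideal.span_le]
    rintro z hz
    simp only [Set.mem_insert_iff, Set.mem_singleton_iff] at hz
    rcases hz with rfl | rfl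
    · exact add_mem (by rw [pow_two]; exact Ideal.mul_mem_left _ _ hX0J)
        (Ideal.mul_mem_left _ _ hX0J)
    · exact add_mem (by rw [pow_two]; exact Ideal.mul_mem_left _ _ hX1J)
        (Ideal.mul_mem_left _ _ hX1J)
  have e2 : ((A ⧸ I) ⧸ J.map (Ideal.Quotient.mk I)) ≃+* A ⧸ J :=
    DoubleQuot.quotQuotEquivQuotOfLE hIJ
  have hmap : J.map (Ideal.Quotient.mk I) =
      Ideal.span ({2, x, y} : Set (MvPowerSeries (Fin 2) ℤ_[2] ⧸ I)) := by
    rw [hJ, Ideal.map_span, Set.image_insert_eq, Set.image_insert_eq, Set.image_singleton,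
      hx, hy, map_ofNat]
  rw [← hmap]
  exact ⟨e2.trans e1⟩
end
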